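/- Let W ∈ ℝ^{d×n} be a matrix with nonnegative entries and let F be a nonempty finite subset of ℝ^n_+. Let 1 ≤ p ≤ ∞ and let q satisfy 1/p + 1/q = 1 (with the obvious interpretations when a denominator is ∞). Let û be an extreme point of the polytope W(conv(F)) attaining the minimum of the p-norm ‖·‖_p over the extreme points of W(conv(F)), and let x̂ ∈ F satisfy Wx̂ = û. Then ‖Wx̂‖_p ≤ d^{1/q} · min_{x ∈ F} ‖Wx‖_p. In particular, for p = 1 one gets an exact minimizer (factor 1). -/

import Mathlib

open scoped ENNReal

private lemma rpow_sum_abs_le {ι : Type*} [Fintype ι] (t : ℝ) (ht : 1 ≤ t) (v : ι → ℝ) :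
    (∑ i, |v i| ^ t) ^ (1 / t) ≤ ∑ i, |v i| := by
  have ht0 : (0:ℝ) < t := lt_of_lt_of_le one_pos ht
  set S := ∑ i, |v i| with hS
  have hSnn : 0 ≤ S := Finset.sum_nonneg fun i _ => abs_nonneg _
  have key : ∑ i, |v i| ^ t ≤ S ^ t := by
    have step : ∀ i : ι, |v i| ^ t ≤ |v i| * S ^ (t - 1) := by
      intro i
      have h1 : |v i| ≤ S := Finset.single_le_sum (fun j _ => abs_nonneg (v j)) (Finset.mem_univ i)
      rcases eq_or_lt_of_le (abs_nonneg (v i)) with h0 | h0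
      · rw [← h0, Real.zero_rpow ht0.ne']
        positivity
      · have hsplit := Real.rpow_add h0 1 (t - 1)
        rw [Real.rpow_one, show (1:ℝ) + (t - 1) = t by ring] at hsplit
        rw [hsplit]
        have h2 := Real.rpow_le_rpow (abs_nonneg (v i)) h1 (by linarith : (0:ℝ) ≤ t - 1)
        exact mul_le_mul_of_nonneg_left h2 (abs_nonneg _)
    calc ∑ i, |v i| ^ t ≤ ∑ i, |v i| * S ^ (t - 1) := Finset.sum_le_sum fun i _ => step i
      _ = S * S ^ (t - 1) := by rw [← Finset.sum_mul]
      _ = S ^ t := by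
          rcases eq_or_lt_of_le hSnn with h0 | h0
          · rw [← h0, Real.zero_rpow ht0.ne', zero_mul]
          · have hsplit := Real.rpow_add h0 1 (t - 1)
            rw [Real.rpow_one, show (1:ℝ) + (t - 1) = t by ring] at hsplit
            rw [hsplit]
  calc (∑ i, |v i| ^ t) ^ (1 / t) ≤ (S ^ t) ^ (1 / t) :=
        Real.rpow_le_rpow (Finset.sum_nonneg fun i _ => Real.rpow_nonneg (abs_nonneg _) t) key
          (by positivity)
    _ = S := by
        rw [← Real.rpow_mul hSnn, mul_one_div_cancel ht0.ne', Real.rpow_one]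

private lemma pnorm_le_sum_abs {d : ℕ} (p : ℝ≥0∞) [Fact (1 ≤ p)] (v : Fin d → ℝ) :
    ‖(WithLp.equiv p (Fin d → ℝ)).symm v‖ ≤ ∑ i, |v i| := by
  have hp1 : 1 ≤ p := Fact.out
  by_cases hp : p = ∞
  · subst hp
    rw [PiLp.norm_eq_ciSup]
    rcases Nat.eq_zero_or_pos d with hd | hd
    · subst hd
      rw [Real.iSup_of_isEmpty]
      simp
    · have : Nonempty (Fin d) := ⟨⟨0, hd⟩⟩
      refine ciSup_le fun i => ?_
      calc ‖(WithLp.equiv ∞ (Fin d → ℝ)).symm v i‖ = |v i| := by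
            rw [WithLp.equiv_symm_apply, WithLp.ofLp_toLp]; exact Real.norm_eq_abs _
        _ ≤ ∑ j, |v j| := Finset.single_le_sum (fun j _ => abs_nonneg (v j)) (Finset.mem_univ i)
  · have ht : 1 ≤ p.toReal := by
      rw [← ENNReal.toReal_one]
      exact ENNReal.toReal_mono hp hp1
    rw [PiLp.norm_eq_sum (lt_of_lt_of_le one_pos ht)]
    have : ∀ i, ‖(WithLp.equiv p (Fin d → ℝ)).symm v i‖ = |v i| := fun i => by
      rw [WithLp.equiv_symm_apply, WithLp.ofLp_toLp]; exact Real.norm_eq_abs _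
    simp only [this]
    exact rpow_sum_abs_le p.toReal ht v

private lemma sum_abs_le_pnorm {d : ℕ} (p q : ℝ≥0∞) [Fact (1 ≤ p)] (hpq : 1 / p + 1 / q = 1)
    (v : Fin d → ℝ) :
    ∑ i, |v i| ≤ (d : ℝ) ^ (1 / q).toReal * ‖(WithLp.equiv p (Fin d → ℝ)).symm v‖ := by
  have hp1 : 1 ≤ p := Fact.out
  have hconj : p.HolderConjugate q := ⟨by simpa [one_div] using hpq⟩
  have habs : ∀ i, ‖(WithLp.equiv p (Fin d → ℝ)).symm v i‖ = |v i| := fun i => by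
    rw [WithLp.equiv_symm_apply, WithLp.ofLp_toLp]; exact Real.norm_eq_abs _
  by_cases hp1' : p = 1
  · have hq : q = ∞ := by
      rw [ENNReal.HolderConjugate.conj_eq (p := p) (q := q), hp1']
      simp
    subst hp1' hq
    rw [PiLp.norm_eq_sum (by norm_num)]
    simp only [habs, ENNReal.toReal_one, Real.rpow_one, one_div]
    simp [ENNReal.inv_top]
  · by_cases hp : p = ∞
    · have hq : q = 1 := by
        rw [ENNReal.HolderConjugate.conj_eq (p := p) (q := q), hp]
        simp
      subst hp hq
      simp only [one_div, inv_one, ENNReal.toReal_one, Real.rpow_one]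
      rw [PiLp.norm_eq_ciSup]
      have hb : ∀ i : Fin d, |v i| ≤ ⨆ j, ‖(WithLp.equiv ∞ (Fin d → ℝ)).symm v j‖ := by
        intro i
        rw [← habs i]
        exact le_ciSup (f := fun j => ‖(WithLp.equiv ∞ (Fin d → ℝ)).symm v j‖)
          (Set.finite_range _).bddAbove i
      calc ∑ i, |v i| ≤ ∑ _i : Fin d, ⨆ j, ‖(WithLp.equiv ∞ (Fin d → ℝ)).symm v j‖ :=
            Finset.sum_le_sum fun i _ => hb i
        _ = (d : ℝ) * ⨆ j, ‖(WithLp.equiv ∞ (Fin d → ℝ)).symm v j‖ := by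
            rw [Finset.sum_const, Finset.card_univ, Fintype.card_fin, nsmul_eq_mul]
    · -- 1 < p < ∞
      have hq0 : q ≠ 0 := ENNReal.HolderConjugate.ne_zero q p
      have hqtop : q ≠ ∞ := by
        intro h
        apply hp1'
        have := ENNReal.HolderConjugate.inv_add_inv_eq_one p q
        rw [h, ENNReal.inv_top, add_zero] at this
        exact ENNReal.inv_eq_one.mp this
      have hplt : 1 < p := lt_of_le_of_ne hp1 (Ne.symm hp1')
      have hrconj : p.toReal.HolderConjugate q.toReal := by
        rw [Real.holderConjugate_iff]
        constructor
        · rw [← ENNReal.toReal_one]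
          exact ENNReal.toReal_strict_mono hp hplt
        · have := ENNReal.HolderConjugate.inv_add_inv_eq_one p q
          have hpinv : p⁻¹ ≠ ∞ := by simpa using ENNReal.HolderConjugate.ne_zero p q
          have hqinv : q⁻¹ ≠ ∞ := by simpa using hq0
          calc p.toReal⁻¹ + q.toReal⁻¹ = (p⁻¹).toReal + (q⁻¹).toReal := by
                rw [ENNReal.toReal_inv, ENNReal.toReal_inv]
            _ = (p⁻¹ + q⁻¹).toReal := (ENNReal.toReal_add hpinv hqinv).symm
            _ = 1 := by rw [this, ENNReal.toReal_one]
      have hpt : 0 < p.toReal := hrconj.pos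
      have holder := Real.inner_le_Lp_mul_Lq (Finset.univ : Finset (Fin d))
        (fun _ => (1:ℝ)) (fun i => |v i|) hrconj.symm
      simp only [one_mul, abs_abs, abs_one, Real.one_rpow, Finset.sum_const,
        Finset.card_univ, Fintype.card_fin, nsmul_eq_mul, mul_one] at holder
      have hnorm : ‖(WithLp.equiv p (Fin d → ℝ)).symm v‖
          = (∑ i, |v i| ^ p.toReal) ^ (1 / p.toReal) := by
        rw [PiLp.norm_eq_sum hpt]
        simp only [habs]
      have hqr : (1 / q).toReal = 1 / q.toReal := by
        rw [one_div, ENNReal.toReal_inv, one_div]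
      rw [hnorm, hqr]
      exact holder

theorem pnorm_minimization_approximation
    (d n : ℕ) (p q : ℝ≥0∞) [Fact (1 ≤ p)] (hpq : 1 / p + 1 / q = 1)
    (W : Matrix (Fin d) (Fin n) ℝ) (hW : ∀ i j, 0 ≤ W i j)
    (F : Finset (Fin n → ℝ)) (hFne : F.Nonempty)
    (hFpos : ∀ x ∈ F, ∀ j, 0 ≤ x j)
    (uhat : Fin d → ℝ)
    (huext : uhat ∈
      (W.mulVecLin '' (convexHull ℝ (F : Set (Fin n → ℝ)))).extremePoints ℝ)
    (humin : ∀ u ∈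
      (W.mulVecLin '' (convexHull ℝ (F : Set (Fin n → ℝ)))).extremePoints ℝ,
      ‖(WithLp.equiv p (Fin d → ℝ)).symm uhat‖ ≤ ‖(WithLp.equiv p (Fin d → ℝ)).symm u‖)
    (xhat : Fin n → ℝ) (hxhatF : xhat ∈ F) (hxhat : W.mulVec xhat = uhat) :
    (∀ x ∈ F,
      ‖(WithLp.equiv p (Fin d → ℝ)).symm (W.mulVec xhat)‖ ≤
        (d : ℝ) ^ (1 / q).toReal *
          ‖(WithLp.equiv p (Fin d → ℝ)).symm (W.mulVec x)‖) ∧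
    (p = 1 → ∀ x ∈ F,
      ‖(WithLp.equiv p (Fin d → ℝ)).symm (W.mulVec xhat)‖ ≤
        ‖(WithLp.equiv p (Fin d → ℝ)).symm (W.mulVec x)‖) := by
  have hconj : p.HolderConjugate q := ⟨by simpa [one_div] using hpq⟩
  set S : Set (Fin d → ℝ) := W.mulVecLin '' (convexHull ℝ (F : Set (Fin n → ℝ))) with hSdef
  have hS : S = convexHull ℝ (W.mulVecLin '' (F : Set (Fin n → ℝ))) :=
    W.mulVecLin.image_convexHull _
  have hTfin : (W.mulVecLin '' (F : Set (Fin n → ℝ))).Finite :=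
    F.finite_toSet.image _
  set E : Set (Fin d → ℝ) := S.extremePoints ℝ with hEdef
  have hE_sub : E ⊆ W.mulVecLin '' (F : Set (Fin n → ℝ)) := by
    rw [hEdef, hS]
    exact extremePoints_convexHull_subset
  have hEfin : E.Finite := hTfin.subset hE_sub
  have hScomp : IsCompact S := by rw [hS]; exact hTfin.isCompact_convexHull ℝ
  have hSconv : Convex ℝ S := by rw [hS]; exact convex_convexHull ℝ _
  have hSKM : S = convexHull ℝ E := by
    rw [← closure_convexHull_extremePoints hScomp hSconv,
      (hEfin.isClosed_convexHull ℝ).closure_eq]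
  -- nonnegativity of points in the image of F
  have hTpos : ∀ u ∈ W.mulVecLin '' (F : Set (Fin n → ℝ)), ∀ i, 0 ≤ u i := by
    rintro u ⟨x, hxF, rfl⟩ i
    simp only [Matrix.mulVecLin_apply, Matrix.mulVec, dotProduct]
    exact Finset.sum_nonneg fun j _ => mul_nonneg (hW i j) (hFpos x hxF j)
  have hlin : IsLinearMap ℝ (fun u : Fin d → ℝ => ∑ i, u i) :=
    ⟨fun u v => by simp [Finset.sum_add_distrib], fun c u => by simp [Finset.mul_sum]⟩
  have hEne : E.Nonempty := ⟨uhat, huext⟩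
  have main : ∀ x ∈ F,
      ‖(WithLp.equiv p (Fin d → ℝ)).symm (W.mulVec xhat)‖ ≤
        (d : ℝ) ^ (1 / q).toReal * ‖(WithLp.equiv p (Fin d → ℝ)).symm (W.mulVec x)‖ := by
    intro x hxF
    -- the minimizing extreme point of the coordinate-sum functional
    have hEfne : hEfin.toFinset.Nonempty := by
      rwa [Set.Finite.toFinset_nonempty]
    obtain ⟨e, heE', hem⟩ := Finset.exists_mem_eq_inf' hEfne (fun u : Fin d → ℝ => ∑ i, u i)
    have heE : e ∈ E := (Set.Finite.mem_toFinset hEfin).mp heE'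
    have hWx_mem : W.mulVec x ∈ S := ⟨x, subset_convexHull ℝ _ hxF, rfl⟩
    have hWx_hull : W.mulVec x ∈ convexHull ℝ E := by rwa [← hSKM]
    -- linear functional bound via convexity
    have hmin : ∑ i, e i ≤ ∑ i, (W.mulVec x) i := by
      have hC : convexHull ℝ E ⊆ {u : Fin d → ℝ | ∑ i, e i ≤ ∑ i, u i} := by
        apply convexHull_min _ (convex_halfSpace_ge hlin _)
        intro u huE
        simp only [Set.mem_setOf_eq]
        rw [← hem]
        exact Finset.inf'_le _ ((Set.Finite.mem_toFinset hEfin).mpr huE)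
      exact hC hWx_hull
    have hepos : ∀ i, 0 ≤ e i := hTpos e (hE_sub heE) 
    have hxpos : ∀ i, 0 ≤ (W.mulVec x) i :=
      hTpos (W.mulVec x) ⟨x, hxF, rfl⟩
    calc ‖(WithLp.equiv p (Fin d → ℝ)).symm (W.mulVec xhat)‖
        ≤ ‖(WithLp.equiv p (Fin d → ℝ)).symm e‖ := by
          rw [hxhat]; exact humin e heE
      _ ≤ ∑ i, |e i| := pnorm_le_sum_abs p e
      _ = ∑ i, e i := by
          exact Finset.sum_congr rfl fun i _ => abs_of_nonneg (hepos i)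
      _ ≤ ∑ i, (W.mulVec x) i := hmin
      _ = ∑ i, |(W.mulVec x) i| :=
          (Finset.sum_congr rfl fun i _ => (abs_of_nonneg (hxpos i)).symm)
      _ ≤ (d : ℝ) ^ (1 / q).toReal * ‖(WithLp.equiv p (Fin d → ℝ)).symm (W.mulVec x)‖ :=
          sum_abs_le_pnorm p q hpq _
  refine ⟨main, fun hp1 x hxF => ?_⟩
  have hq : q = ∞ := by
    rw [ENNReal.HolderConjugate.conj_eq (p := p) (q := q), hp1]; simp
  have := main x hxF
  rw [hq] at this
  simpa using this
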